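/- The first-level complementary wavelet packets φ0 and φ1 satisfy the same orthonormality relations as the wavelet packets ψ0 and ψ1: for all μ, ν ∈ {0,1} and all l, p ∈ {0,…,N/2−1}, ⟨φ_μ[·−2l], φ_ν[·−2p]⟩ = δ[μ−ν]·δ[l−p]; in particular the family {φ0[·−2l]} ∪ {φ1[·−2l]}, l = 0,…,N/2−1, is an orthonormal basis of Π[N]. -/

import Mathlib

open Finset

noncomputable def omegaN (N : ℕ) : ℂ := Complex.exp (2 * Real.pi * Complex.I / N)

noncomputable def U4r (N r : ℕ) (n : ℤ) : ℝ :=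
  ((Real.cos (Real.pi * n / N)) ^ (4 * r) + (Real.sin (Real.pi * n / N)) ^ (4 * r)) / 2

noncomputable def betaF (N r : ℕ) (n : ℤ) : ℂ :=
  Complex.ofReal ((Real.cos (Real.pi * n / N)) ^ (2 * r) / Real.sqrt (U4r N r n))

noncomputable def alphaF (N r : ℕ) (n : ℤ) : ℂ :=
  omegaN N ^ n * Complex.ofReal ((Real.sin (Real.pi * n / N)) ^ (2 * r) / Real.sqrt (U4r N r n))

noncomputable def psi0 (N r : ℕ) (k : ℤ) : ℂ :=
  (N : ℂ)⁻¹ * ∑ n ∈ Finset.range N, omegaN N ^ (k * (n : ℤ)) * betaF N r n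

noncomputable def psi1 (N r : ℕ) (k : ℤ) : ℂ :=
  (N : ℂ)⁻¹ * ∑ n ∈ Finset.range N, omegaN N ^ (k * (n : ℤ)) * alphaF N r n

noncomputable def ip (N : ℕ) (x y : ℤ → ℂ) : ℂ :=
  ∑ k ∈ Finset.range N, x k * (starRingEnd ℂ) (y k)

/-- DFT of the first-level complementary wavelet packet φ₀. -/
noncomputable def phi0hat (N r : ℕ) (n : ℕ) : ℂ :=
  if n = 0 then (Real.sqrt 2 : ℂ)
  else if 2 * n = N then 0
  else if 2 * n < N then -Complex.I * betaF N r n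
  else Complex.I * betaF N r n

/-- DFT of the first-level complementary wavelet packet φ₁. -/
noncomputable def phi1hat (N r : ℕ) (n : ℕ) : ℂ :=
  if n = 0 then 0
  else if 2 * n = N then -(Real.sqrt 2 : ℂ)
  else if 2 * n < N then -Complex.I * alphaF N r n
  else Complex.I * alphaF N r n

/-- The first-level complementary wavelet packets φ₀, φ₁, via the inverse DFT. -/
noncomputable def phiW (N r : ℕ) (μ : Fin 2) (k : ℤ) : ℂ :=
  (N : ℂ)⁻¹ * ∑ n ∈ Finset.range N,
    omegaN N ^ (k * (n : ℤ)) * (if μ.val = 0 then phi0hat N r n else phi1hat N r n)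

-- Auxiliary lemmas

lemma omega_ne_zero (N : ℕ) : omegaN N ≠ 0 := Complex.exp_ne_zero _

lemma omega_prim (N : ℕ) (hN : N ≠ 0) : IsPrimitiveRoot (omegaN N) N :=
  Complex.isPrimitiveRoot_exp N hN

lemma omega_zpow_one_iff (N : ℕ) (hN : N ≠ 0) (d : ℤ) :
    omegaN N ^ d = 1 ↔ (N:ℤ) ∣ d :=
  (omega_prim N hN).zpow_eq_one_iff_dvd d

lemma sum_omega (N : ℕ) (hN : N ≠ 0) (d : ℤ) :
    ∑ n ∈ Finset.range N, omegaN N ^ ((n:ℤ) * d) = if (N:ℤ) ∣ d then (N:ℂ) else 0 := by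
  have hω := omega_ne_zero N
  have hrw : ∀ n : ℕ, omegaN N ^ ((n:ℤ) * d) = (omegaN N ^ d) ^ n := by
    intro n; rw [mul_comm, zpow_mul, zpow_natCast]
  simp only [hrw]
  by_cases h : (N:ℤ) ∣ d
  · simp [h, (omega_zpow_one_iff N hN d).2 h]
  · rw [if_neg h]
    have h1 : omegaN N ^ d ≠ 1 := fun hc => h ((omega_zpow_one_iff N hN d).1 hc)
    rw [geom_sum_eq h1]
    have : (omegaN N ^ d) ^ N = 1 := by
      rw [← zpow_natCast, ← zpow_mul, mul_comm, zpow_mul, zpow_natCast,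
        (omega_prim N hN).pow_eq_one, one_zpow]
    simp [this]

lemma conj_omega (N : ℕ) : (starRingEnd ℂ) (omegaN N) = (omegaN N)⁻¹ := by
  rw [omegaN, ← Complex.exp_conj, ← Complex.exp_neg]
  congr 1
  simp [map_div₀, Complex.conj_I]
  rw [Complex.conj_ofNat]; ring

lemma conj_omega_zpow (N : ℕ) (d : ℤ) :
    (starRingEnd ℂ) (omegaN N ^ d) = omegaN N ^ (-d) := by
  rw [map_zpow₀, conj_omega, inv_zpow, ← zpow_neg]

lemma omega_pow_M (N M : ℕ) (hNM : N = 2 * M) (hM : M ≠ 0) :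
    omegaN N ^ (M:ℤ) = -1 := by
  have hMc : (M:ℂ) ≠ 0 := Nat.cast_ne_zero.2 hM
  rw [omegaN, zpow_natCast, ← Complex.exp_nat_mul, ← Complex.exp_pi_mul_I]
  congr 1
  subst hNM
  push_cast
  field_simp

lemma omega_sq (N M : ℕ) (hNM : N = 2 * M) (hM : M ≠ 0) :
    omegaN N ^ (2:ℤ) = omegaN M := by
  have hMc : (M:ℂ) ≠ 0 := Nat.cast_ne_zero.2 hM
  rw [omegaN, omegaN, zpow_ofNat, ← Complex.exp_nat_mul]
  congr 1
  subst hNM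
  push_cast
  field_simp

lemma even_pow_nonneg (s : ℝ) (r : ℕ) : 0 ≤ s ^ (4*r) := by
  have h : 4*r = 2*(2*r) := by ring
  rw [h, pow_mul]; positivity

lemma even_pow_pos (c : ℝ) (hc : c ≠ 0) (r : ℕ) : 0 < c ^ (4*r) := by
  have h : 4*r = 2*(2*r) := by ring
  rw [h, pow_mul]
  positivity

lemma pow4_pos (c s : ℝ) (h : c^2 + s^2 = 1) (r : ℕ) :
    0 < c ^ (4*r) + s ^ (4*r) := by
  have hcs : c ≠ 0 ∨ s ≠ 0 := by
    by_contra hc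
    push_neg at hc
    rw [hc.1, hc.2] at h
    norm_num at h
  rcases hcs with hc | hs
  · linarith [even_pow_pos c hc r, even_pow_nonneg s r]
  · linarith [even_pow_pos s hs r, even_pow_nonneg c r]

lemma U4r_pos (N r : ℕ) (n : ℤ) : 0 < U4r N r n := by
  have := pow4_pos (Real.cos (Real.pi * n / N)) (Real.sin (Real.pi * n / N))
    (by rw [Real.cos_sq_add_sin_sq]) r
  unfold U4r; linarith

-- argument shift

lemma arg_shift (N M : ℕ) (hNM : N = 2*M) (hM : M ≠ 0) (n : ℤ) :
    Real.pi * (n + M) / N = Real.pi * n / N + Real.pi / 2 := by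
  have hMne : (M:ℝ) ≠ 0 := Nat.cast_ne_zero.2 hM
  subst hNM
  push_cast
  field_simp

lemma cos_shift (N M : ℕ) (hNM : N = 2*M) (hM : M ≠ 0) (n : ℤ) :
    Real.cos (Real.pi * (n + M) / N) = - Real.sin (Real.pi * n / N) := by
  rw [arg_shift N M hNM hM n, Real.cos_add_pi_div_two]

lemma sin_shift (N M : ℕ) (hNM : N = 2*M) (hM : M ≠ 0) (n : ℤ) :
    Real.sin (Real.pi * (n + M) / N) = Real.cos (Real.pi * n / N) := by
  rw [arg_shift N M hNM hM n, Real.sin_add_pi_div_two]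

lemma U4r_shift (N M r : ℕ) (hNM : N = 2*M) (hM : M ≠ 0) (n : ℤ) :
    U4r N r (n + M) = U4r N r n := by
  unfold U4r
  push_cast
  rw [cos_shift N M hNM hM n, sin_shift N M hNM hM n]
  have h : 4*r = 2*(2*r) := by ring
  rw [h, pow_mul, pow_mul, pow_mul, neg_pow, neg_one_sq, one_mul, sq]
  ring

lemma betaF_shift (N M r : ℕ) (hNM : N = 2*M) (hM : M ≠ 0) (n : ℤ) :
    betaF N r (n + M) =
      Complex.ofReal ((Real.sin (Real.pi * n / N)) ^ (2*r) / Real.sqrt (U4r N r n)) := by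
  unfold betaF
  simp only [Int.cast_add, Int.cast_natCast]
  rw [cos_shift N M hNM hM n, U4r_shift N M r hNM hM n]
  congr 2
  rw [neg_pow]
  have : 2*r = 2*r := rfl
  rw [Even.neg_one_pow ⟨r, by ring⟩, one_mul]

lemma alphaF_shift (N M r : ℕ) (hNM : N = 2*M) (hM : M ≠ 0)
    (hwM : omegaN N ^ (M:ℤ) = -1) (n : ℤ) :
    alphaF N r (n + M) =
      -(omegaN N ^ n *
        Complex.ofReal ((Real.cos (Real.pi * n / N)) ^ (2*r) / Real.sqrt (U4r N r n))) := by
  unfold alphaF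
  simp only [Int.cast_add, Int.cast_natCast]
  rw [sin_shift N M hNM hM n, U4r_shift N M r hNM hM n]
  have hω : omegaN N ≠ 0 := Complex.exp_ne_zero _
  rw [zpow_add₀ hω, hwM]
  ring

lemma ip_shift (N : ℕ) (hN : N ≠ 0) (f g : ℕ → ℂ) (a b : ℤ) :
    ∑ k ∈ Finset.range N,
      (((N:ℂ)⁻¹ * ∑ n ∈ Finset.range N, omegaN N ^ (((k:ℤ) + a) * n) * f n) *
      (starRingEnd ℂ) ((N:ℂ)⁻¹ * ∑ m ∈ Finset.range N, omegaN N ^ (((k:ℤ) + b) * m) * g m))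
    = (N:ℂ)⁻¹ * ∑ n ∈ Finset.range N, omegaN N ^ ((a - b) * n) * (f n * (starRingEnd ℂ) (g n)) := by
  have hω := omega_ne_zero N
  have step1 : ∀ k : ℕ,
      (((N:ℂ)⁻¹ * ∑ n ∈ Finset.range N, omegaN N ^ (((k:ℤ) + a) * n) * f n) *
      (starRingEnd ℂ) ((N:ℂ)⁻¹ * ∑ m ∈ Finset.range N, omegaN N ^ (((k:ℤ) + b) * m) * g m))
      = (N:ℂ)⁻¹ * (N:ℂ)⁻¹ * ∑ n ∈ Finset.range N, ∑ m ∈ Finset.range N,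
          omegaN N ^ ((k:ℤ) * (n - m)) * (omegaN N ^ (a * n - b * m) * (f n * (starRingEnd ℂ) (g m))) := by
    intro k
    simp only [map_mul, map_sum, conj_omega_zpow, map_inv₀, Complex.conj_natCast]
    rw [mul_mul_mul_comm, Finset.sum_mul_sum]
    congr 1
    apply Finset.sum_congr rfl; intro n _
    apply Finset.sum_congr rfl; intro m _
    calc omegaN N ^ (((k:ℤ) + a) * n) * f n *
          (omegaN N ^ (-(((k:ℤ) + b) * m)) * (starRingEnd ℂ) (g m))
        = omegaN N ^ ((((k:ℤ) + a) * n) + -(((k:ℤ) + b) * m)) * (f n * (starRingEnd ℂ) (g m)) := by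
          rw [zpow_add₀ hω]; ring
      _ = _ := by
          rw [show (((k:ℤ) + a) * n) + -(((k:ℤ) + b) * m)
              = ((k:ℤ) * ((n:ℤ) - m)) + (a * n - b * m) from by ring, zpow_add₀ hω]
          ring
  rw [Finset.sum_congr rfl (fun k _ => step1 k), ← Finset.mul_sum]
  rw [Finset.sum_comm]
  have step2 : ∀ n ∈ Finset.range N,
      ∑ k ∈ Finset.range N, ∑ m ∈ Finset.range N,
        omegaN N ^ ((k:ℤ) * (n - m)) * (omegaN N ^ (a * n - b * m) * (f n * (starRingEnd ℂ) (g m)))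
      = (N:ℂ) * (omegaN N ^ ((a-b) * n) * (f n * (starRingEnd ℂ) (g n))) := by
    intro n hn
    rw [Finset.sum_comm]
    have inner : ∀ m ∈ Finset.range N,
        ∑ k ∈ Finset.range N,
          omegaN N ^ ((k:ℤ) * (n - m)) * (omegaN N ^ (a * n - b * m) * (f n * (starRingEnd ℂ) (g m)))
        = (if (N:ℤ) ∣ ((n:ℤ) - m) then (N:ℂ) else 0) *
            (omegaN N ^ (a * n - b * m) * (f n * (starRingEnd ℂ) (g m))) := by
      intro m hm
      rw [← Finset.sum_mul, sum_omega N hN]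
    rw [Finset.sum_congr rfl inner]
    rw [Finset.sum_eq_single_of_mem n hn]
    · have : (N:ℤ) ∣ ((n:ℤ) - n) := by simp
      rw [if_pos this]
      congr 2
      ring
    · intro m hm hmn
      have : ¬ (N:ℤ) ∣ ((n:ℤ) - m) := by
        simp only [Finset.mem_range] at hn hm
        intro hdvd
        have habs : |(n:ℤ) - m| < N := by
          rw [abs_lt]; omega
        have := Int.eq_zero_of_abs_lt_dvd hdvd habs
        have : (n:ℤ) = m := by omega
        exact hmn (by exact_mod_cast this.symm)
      rw [if_neg this, zero_mul]
  rw [Finset.sum_congr rfl step2, ← Finset.mul_sum]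
  have hNc : (N:ℂ) ≠ 0 := Nat.cast_ne_zero.2 hN
  field_simp

lemma dvd_iff_eq (M : ℕ) (n m : ℕ) (hn : n < M) (hm : m < M) (e : ℤ) :
    ((M:ℤ) ∣ ((n:ℤ) - m + e * M)) ↔ n = m := by
  constructor
  · intro hdvd
    have h2 : (M:ℤ) ∣ ((n:ℤ) - m) := by
      have hd : (M:ℤ) ∣ e * M := Dvd.intro_left e rfl
      simpa using hdvd.sub hd
    have habs : |(n:ℤ) - m| < M := by rw [abs_lt]; omega
    have := Int.eq_zero_of_abs_lt_dvd h2 habs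
    omega
  · intro h; subst h; simp

lemma sum_l_omega (N M : ℕ) (hNM : N = 2*M) (hM : M ≠ 0) (d : ℤ) :
    ∑ l ∈ Finset.range M, omegaN N ^ (2 * (l:ℤ) * d)
      = if (M:ℤ) ∣ d then (M:ℂ) else 0 := by
  have : ∀ l : ℕ, omegaN N ^ (2 * (l:ℤ) * d) = omegaN M ^ ((l:ℤ) * d) := by
    intro l
    rw [mul_assoc, zpow_mul, omega_sq N M hNM hM]
  simp only [this]
  exact sum_omega M hM d

lemma kernel (N M : ℕ) (hNM : N = 2*M) (hM : M ≠ 0)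
    (h : Fin 2 → ℕ → ℂ)
    (hcol : ∀ n < M, ∀ c d : Fin 2,
      (∑ μ : Fin 2, (starRingEnd ℂ) (h μ (n + c.val * M)) * h μ (n + d.val * M))
        = if c = d then 2 else 0)
    (t k : ℤ) :
    ∑ μ : Fin 2, ∑ l ∈ Finset.range M,
      ((starRingEnd ℂ) ((N:ℂ)⁻¹ * ∑ n ∈ Finset.range N, omegaN N ^ ((t - 2*(l:ℤ)) * n) * h μ n)) *
      ((N:ℂ)⁻¹ * ∑ m ∈ Finset.range N, omegaN N ^ ((k - 2*(l:ℤ)) * m) * h μ m)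
    = (N:ℂ)⁻¹ * ∑ n ∈ Finset.range N, omegaN N ^ ((k - t) * n) := by
  have hω := omega_ne_zero N
  have hN : N ≠ 0 := by omega
  -- G function
  set G : ℕ → ℕ → ℂ := fun n m => ∑ μ : Fin 2, (starRingEnd ℂ) (h μ n) * h μ m with hG
  -- Step 1: rewrite each (μ, l) summand as a double sum
  have step1 : ∀ (μ : Fin 2) (l : ℕ),
      ((starRingEnd ℂ) ((N:ℂ)⁻¹ * ∑ n ∈ Finset.range N, omegaN N ^ ((t - 2*(l:ℤ)) * n) * h μ n)) *
      ((N:ℂ)⁻¹ * ∑ m ∈ Finset.range N, omegaN N ^ ((k - 2*(l:ℤ)) * m) * h μ m)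
      = (N:ℂ)⁻¹ * (N:ℂ)⁻¹ * ∑ n ∈ Finset.range N, ∑ m ∈ Finset.range N,
          omegaN N ^ (2 * (l:ℤ) * ((n:ℤ) - m)) *
            (omegaN N ^ (k * m - t * n) * ((starRingEnd ℂ) (h μ n) * h μ m)) := by
    intro μ l
    simp only [map_mul, map_sum, conj_omega_zpow, map_inv₀, Complex.conj_natCast]
    rw [mul_mul_mul_comm, Finset.sum_mul_sum]
    congr 1
    apply Finset.sum_congr rfl; intro n _
    apply Finset.sum_congr rfl; intro m _
    calc omegaN N ^ (-((t - 2*(l:ℤ)) * n)) * (starRingEnd ℂ) (h μ n) *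
          (omegaN N ^ ((k - 2*(l:ℤ)) * m) * h μ m)
        = omegaN N ^ (-((t - 2*(l:ℤ)) * n) + (k - 2*(l:ℤ)) * m) *
            ((starRingEnd ℂ) (h μ n) * h μ m) := by rw [zpow_add₀ hω]; ring
      _ = _ := by
          rw [show -((t - 2*(l:ℤ)) * n) + (k - 2*(l:ℤ)) * m
              = 2 * (l:ℤ) * ((n:ℤ) - m) + (k * m - t * n) from by ring, zpow_add₀ hω]
          ring
  simp only [step1, ← Finset.mul_sum]
  have swapl : ∀ (F : ℕ → ℕ → ℕ → ℂ),
      ∑ l ∈ Finset.range M, ∑ n ∈ Finset.range N, ∑ m ∈ Finset.range N, F l n m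
      = ∑ n ∈ Finset.range N, ∑ m ∈ Finset.range N, ∑ l ∈ Finset.range M, F l n m := by
    intro F
    rw [Finset.sum_comm]
    exact Finset.sum_congr rfl fun n _ => by rw [Finset.sum_comm]
  have swapmu : ∀ (F : Fin 2 → ℕ → ℕ → ℂ),
      ∑ μ : Fin 2, ∑ n ∈ Finset.range N, ∑ m ∈ Finset.range N, F μ n m
      = ∑ n ∈ Finset.range N, ∑ m ∈ Finset.range N, ∑ μ : Fin 2, F μ n m := by
    intro F
    rw [Finset.sum_comm]
    exact Finset.sum_congr rfl fun n _ => by rw [Finset.sum_comm]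
  have step2 : ∑ μ : Fin 2, ∑ l ∈ Finset.range M, ∑ n ∈ Finset.range N, ∑ m ∈ Finset.range N,
      omegaN N ^ (2 * (l:ℤ) * ((n:ℤ) - m)) *
        (omegaN N ^ (k * m - t * n) * ((starRingEnd ℂ) (h μ n) * h μ m))
      = ∑ n ∈ Finset.range N, ∑ m ∈ Finset.range N,
          (if (M:ℤ) ∣ ((n:ℤ) - m) then (M:ℂ) else 0) * (omegaN N ^ (k * m - t * n) * G n m) := by
    have inner : ∀ μ : Fin 2,
        ∑ l ∈ Finset.range M, ∑ n ∈ Finset.range N, ∑ m ∈ Finset.range N,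
          omegaN N ^ (2 * (l:ℤ) * ((n:ℤ) - m)) *
            (omegaN N ^ (k * m - t * n) * ((starRingEnd ℂ) (h μ n) * h μ m))
        = ∑ n ∈ Finset.range N, ∑ m ∈ Finset.range N,
            (if (M:ℤ) ∣ ((n:ℤ) - m) then (M:ℂ) else 0) *
              (omegaN N ^ (k * m - t * n) * ((starRingEnd ℂ) (h μ n) * h μ m)) := by
      intro μ
      rw [swapl]
      apply Finset.sum_congr rfl; intro n _
      apply Finset.sum_congr rfl; intro m _
      rw [← Finset.sum_mul, sum_l_omega N M hNM hM]
    simp only [inner]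
    rw [swapmu]
    apply Finset.sum_congr rfl; intro n _
    apply Finset.sum_congr rfl; intro m _
    rw [← Finset.mul_sum, ← Finset.mul_sum]
  rw [step2]
  -- Step 3: split ranges and collapse the divisibility condition
  have hNMM : N = M + M := by omega
  have split : ∀ (F : ℕ → ℂ), ∑ n ∈ Finset.range N, F n
      = ∑ n ∈ Finset.range M, (F n + F (M + n)) := by
    intro F
    rw [hNMM, Finset.sum_range_add, ← Finset.sum_add_distrib]
  have step3 : ∑ n ∈ Finset.range N, ∑ m ∈ Finset.range N,
      (if (M:ℤ) ∣ ((n:ℤ) - m) then (M:ℂ) else 0) * (omegaN N ^ (k * m - t * n) * G n m)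
      = ∑ n ∈ Finset.range M,
          ((M:ℂ) * (omegaN N ^ (k * n - t * n) * G n n)
           + (M:ℂ) * (omegaN N ^ (k * (M + n : ℕ) - t * n) * G n (M + n))
           + ((M:ℂ) * (omegaN N ^ (k * n - t * (M + n : ℕ)) * G (M + n) n)
           + (M:ℂ) * (omegaN N ^ (k * (M + n : ℕ) - t * (M + n : ℕ)) * G (M + n) (M + n)))) := by
    rw [split]
    apply Finset.sum_congr rfl
    intro n hn
    rw [Finset.mem_range] at hn
    have splitm : ∀ (n' : ℕ),
        ∑ m ∈ Finset.range N,
          (if (M:ℤ) ∣ ((n':ℤ) - m) then (M:ℂ) else 0) * (omegaN N ^ (k * m - t * n') * G n' m)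
        = ∑ m ∈ Finset.range M,
            ((if (M:ℤ) ∣ ((n':ℤ) - m) then (M:ℂ) else 0) * (omegaN N ^ (k * m - t * n') * G n' m)
            + (if (M:ℤ) ∣ ((n':ℤ) - (M + m : ℕ)) then (M:ℂ) else 0) *
                (omegaN N ^ (k * (M + m : ℕ) - t * n') * G n' (M + m))) := fun n' => split
        (fun m => (if (M:ℤ) ∣ ((n':ℤ) - m) then (M:ℂ) else 0) *
          (omegaN N ^ (k * m - t * n') * G n' m))
    have z1 : ∀ m ∈ Finset.range M, m ≠ n →
        (if (M:ℤ) ∣ ((n:ℤ) - m) then (M:ℂ) else 0) * (omegaN N ^ (k * m - t * n) * G n m)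
        + (if (M:ℤ) ∣ ((n:ℤ) - (M + m : ℕ)) then (M:ℂ) else 0) *
            (omegaN N ^ (k * (M + m : ℕ) - t * n) * G n (M + m)) = 0 := by
      intro m hm hmn
      rw [Finset.mem_range] at hm
      have e1 : ¬ ((M:ℤ) ∣ ((n:ℤ) - m)) := by
        intro hc
        have : ((n:ℤ) - m) = ((n:ℤ) - m + 0 * M) := by ring
        rw [this] at hc
        exact hmn ((dvd_iff_eq M n m hn hm 0).1 hc).symm
      have e2 : ¬ ((M:ℤ) ∣ ((n:ℤ) - (M + m : ℕ))) := by
        intro hc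
        have : ((n:ℤ) - (M + m : ℕ)) = ((n:ℤ) - m + (-1) * M) := by push_cast; ring
        rw [this] at hc
        exact hmn ((dvd_iff_eq M n m hn hm (-1)).1 hc).symm
      rw [if_neg e1, if_neg e2]
      ring
    have z2 : ∀ m ∈ Finset.range M, m ≠ n →
        (if (M:ℤ) ∣ (((M + n : ℕ):ℤ) - m) then (M:ℂ) else 0) *
            (omegaN N ^ (k * m - t * (M + n : ℕ)) * G (M + n) m)
        + (if (M:ℤ) ∣ (((M + n : ℕ):ℤ) - (M + m : ℕ)) then (M:ℂ) else 0) *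
            (omegaN N ^ (k * (M + m : ℕ) - t * (M + n : ℕ)) * G (M + n) (M + m)) = 0 := by
      intro m hm hmn
      rw [Finset.mem_range] at hm
      have e1 : ¬ ((M:ℤ) ∣ (((M + n : ℕ):ℤ) - m)) := by
        intro hc
        have : (((M + n : ℕ):ℤ) - m) = ((n:ℤ) - m + 1 * M) := by push_cast; ring
        rw [this] at hc
        exact hmn ((dvd_iff_eq M n m hn hm 1).1 hc).symm
      have e2 : ¬ ((M:ℤ) ∣ (((M + n : ℕ):ℤ) - (M + m : ℕ))) := by
        intro hc
        have : (((M + n : ℕ):ℤ) - (M + m : ℕ)) = ((n:ℤ) - m + 0 * M) := by push_cast; ring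
        rw [this] at hc
        exact hmn ((dvd_iff_eq M n m hn hm 0).1 hc).symm
      rw [if_neg e1, if_neg e2]
      ring
    rw [splitm n, splitm (M + n),
        Finset.sum_eq_single_of_mem n (Finset.mem_range.2 hn) z1,
        Finset.sum_eq_single_of_mem n (Finset.mem_range.2 hn) z2]
    · have d1 : ((M:ℤ) ∣ ((n:ℤ) - n)) := by simp
      have d2 : ((M:ℤ) ∣ ((n:ℤ) - (M + n : ℕ))) := by
        push_cast; ring_nf; exact Dvd.intro (-1) (by ring)
      have d3 : ((M:ℤ) ∣ (((M + n : ℕ):ℤ) - n)) := by push_cast; simp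
      have d4 : ((M:ℤ) ∣ (((M + n : ℕ):ℤ) - (M + n : ℕ))) := by simp
      rw [if_pos d1, if_pos d2, if_pos d3, if_pos d4]
  rw [step3]
  -- Step 4: use hcol to evaluate G, and resum
  have step4 : ∀ n ∈ Finset.range M,
      ((M:ℂ) * (omegaN N ^ (k * n - t * n) * G n n)
       + (M:ℂ) * (omegaN N ^ (k * (M + n : ℕ) - t * n) * G n (M + n))
       + ((M:ℂ) * (omegaN N ^ (k * n - t * (M + n : ℕ)) * G (M + n) n)
       + (M:ℂ) * (omegaN N ^ (k * (M + n : ℕ) - t * (M + n : ℕ)) * G (M + n) (M + n))))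
      = (M:ℂ) * 2 * (omegaN N ^ ((k - t) * n) + omegaN N ^ ((k - t) * (M + n : ℕ))) := by
    intro n hn
    rw [Finset.mem_range] at hn
    have g11 : G n n = 2 := by
      have := hcol n hn 0 0
      simp only [hG]
      simpa using this
    have g22 : G (M + n) (M + n) = 2 := by
      have := hcol n hn 1 1
      simp only [hG]
      simpa [Nat.add_comm n M] using this
    have g12 : G n (M + n) = 0 := by
      have := hcol n hn 0 1
      simp only [hG]
      simpa [Nat.add_comm n M] using this
    have g21 : G (M + n) n = 0 := by
      have := hcol n hn 1 0
      simp only [hG]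
      simpa [Nat.add_comm n M] using this
    rw [g11, g22, g12, g21]
    have ee1 : (k * n - t * n : ℤ) = (k - t) * n := by ring
    have ee2 : (k * ((M + n : ℕ):ℤ) - t * ((M + n : ℕ):ℤ)) = (k - t) * ((M + n : ℕ):ℤ) := by ring
    rw [ee1, ee2]
    ring
  rw [Finset.sum_congr rfl step4, ← Finset.mul_sum, Finset.sum_add_distrib]
  have back : ∑ n ∈ Finset.range M, omegaN N ^ ((k - t) * n)
      + ∑ n ∈ Finset.range M, omegaN N ^ ((k - t) * ((M + n : ℕ):ℤ))
      = ∑ n ∈ Finset.range N, omegaN N ^ ((k - t) * n) := by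
    rw [hNMM, Finset.sum_range_add]
  rw [back]
  have hNc : (N:ℂ) ≠ 0 := Nat.cast_ne_zero.2 hN
  have hMc : (N:ℂ) = 2 * M := by rw [hNM]; push_cast; ring
  rw [hMc]
  have hMne : (M:ℂ) ≠ 0 := Nat.cast_ne_zero.2 hM
  field_simp

noncomputable def hhatF (N r : ℕ) (μ : Fin 2) (n : ℕ) : ℂ :=
  if μ.val = 0 then phi0hat N r n else phi1hat N r n

lemma AB_sq (N r : ℕ) (n : ℤ) :
    ((Real.cos (Real.pi * n / N)) ^ (2*r) / Real.sqrt (U4r N r n))^2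
    + ((Real.sin (Real.pi * n / N)) ^ (2*r) / Real.sqrt (U4r N r n))^2 = 2 := by
  have hU := U4r_pos N r n
  have hq : Real.sqrt (U4r N r n) ^ 2 = U4r N r n := Real.sq_sqrt hU.le
  rw [div_pow, div_pow, hq, ← pow_mul, ← pow_mul, ← add_div]
  have h24 : 2 * r * 2 = 4 * r := by ring
  rw [h24]
  have hUdef : (Real.cos (Real.pi * n / N)) ^ (4*r) + (Real.sin (Real.pi * n / N)) ^ (4*r)
      = 2 * U4r N r n := by unfold U4r; ring
  rw [hUdef]
  field_simp

lemma entries (N M r : ℕ) (hNM : N = 2*M) (hM : M ≠ 0) (n : ℕ) (hn0 : 0 < n) (hnM : n < M) :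
    ∃ A B : ℝ, (A:ℂ)^2 + (B:ℂ)^2 = 2 ∧
      phi0hat N r n = -Complex.I * A ∧
      phi0hat N r (M + n) = Complex.I * B ∧
      phi1hat N r n = -Complex.I * (omegaN N ^ (n:ℤ) * B) ∧
      phi1hat N r (M + n) = -(Complex.I * (omegaN N ^ (n:ℤ) * A)) := by
  refine ⟨(Real.cos (Real.pi * n / N)) ^ (2*r) / Real.sqrt (U4r N r n),
          (Real.sin (Real.pi * n / N)) ^ (2*r) / Real.sqrt (U4r N r n), ?_, ?_, ?_, ?_, ?_⟩
  · have := AB_sq N r (n:ℤ)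
    push_cast at this ⊢
    exact_mod_cast congrArg (Complex.ofReal) this
  · unfold phi0hat
    rw [if_neg (by omega), if_neg (by omega), if_pos (by omega)]
    unfold betaF
    norm_num
  · unfold phi0hat
    rw [if_neg (by omega), if_neg (by omega), if_neg (by omega)]
    have hc : ((M + n : ℕ):ℤ) = (n:ℤ) + M := by push_cast; ring
    rw [hc, betaF_shift N M r hNM hM]
    norm_num
  · unfold phi1hat
    rw [if_neg (by omega), if_neg (by omega), if_pos (by omega)]
    unfold alphaF
    norm_num
  · unfold phi1hat
    rw [if_neg (by omega), if_neg (by omega), if_neg (by omega)]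
    have hc : ((M + n : ℕ):ℤ) = (n:ℤ) + M := by push_cast; ring
    rw [hc, alphaF_shift N M r hNM hM (omega_pow_M N M hNM hM)]
    norm_num



lemma sqrt2_sq : ((Real.sqrt 2 : ℝ):ℂ) * ((Real.sqrt 2 : ℝ):ℂ) = 2 := by
  norm_cast
  rw [Real.mul_self_sqrt (by norm_num)]

lemma row_lemma (N M r : ℕ) (hNM : N = 2*M) (hM : M ≠ 0)
    (μ ν : Fin 2) (n : ℕ) (hn : n < M) :
    hhatF N r μ n * (starRingEnd ℂ) (hhatF N r ν n)
      + hhatF N r μ (M + n) * (starRingEnd ℂ) (hhatF N r ν (M + n))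
    = if μ = ν then 2 else 0 := by
  rcases Nat.eq_zero_or_pos n with hn0 | hn0
  · subst hn0
    have p00 : phi0hat N r 0 = (Real.sqrt 2 : ℂ) := by unfold phi0hat; rw [if_pos rfl]
    have p0M : phi0hat N r M = 0 := by
      unfold phi0hat; rw [if_neg (by omega), if_pos (by omega)]
    have p10 : phi1hat N r 0 = 0 := by unfold phi1hat; rw [if_pos rfl]
    have p1M : phi1hat N r M = -(Real.sqrt 2 : ℂ) := by
      unfold phi1hat; rw [if_neg (by omega), if_pos (by omega)]
    fin_cases μ <;> fin_cases ν <;>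
      simp [hhatF, p00, p0M, p10, p1M, Complex.conj_ofReal, sqrt2_sq, map_neg]
  · obtain ⟨A, B, hAB, e0n, e0M, e1n, e1M⟩ := entries N M r hNM hM n hn0 hn
    have hω : omegaN N ≠ 0 := Complex.exp_ne_zero _
    set w := omegaN N ^ (n:ℤ) with hwdef
    set w' := omegaN N ^ (-(n:ℤ)) with hw'def
    have hww : w * w' = 1 := by
      rw [hwdef, hw'def, ← zpow_add₀ hω]; simp
    have hcw : (starRingEnd ℂ) w = w' := by rw [hwdef, conj_omega_zpow, hw'def]
    have hIsq := Complex.I_sq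
    fin_cases μ <;> fin_cases ν <;>
      simp only [hhatF, Fin.val_zero, Fin.val_one, e0n, e0M, e1n, e1M] <;>
      norm_num [map_mul, map_neg, Complex.conj_I, Complex.conj_ofReal, hcw, Fin.ext_iff]
    · linear_combination hAB - ((A:ℂ)^2+(B:ℂ)^2) * hIsq
    · ring
    · ring
    · linear_combination hAB + ((A:ℂ)^2+(B:ℂ)^2) * hww - (w*w')*((A:ℂ)^2+(B:ℂ)^2) * hIsq

lemma col_lemma (N M r : ℕ) (hNM : N = 2*M) (hM : M ≠ 0)
    (n : ℕ) (hn : n < M) (c d : Fin 2) :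
    (∑ μ : Fin 2, (starRingEnd ℂ) (hhatF N r μ (n + c.val * M)) * hhatF N r μ (n + d.val * M))
      = if c = d then 2 else 0 := by
  rcases Nat.eq_zero_or_pos n with hn0 | hn0
  · subst hn0
    have p00 : phi0hat N r 0 = (Real.sqrt 2 : ℂ) := by unfold phi0hat; rw [if_pos rfl]
    have p0M : phi0hat N r M = 0 := by
      unfold phi0hat; rw [if_neg (by omega), if_pos (by omega)]
    have p10 : phi1hat N r 0 = 0 := by unfold phi1hat; rw [if_pos rfl]
    have p1M : phi1hat N r M = -(Real.sqrt 2 : ℂ) := by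
      unfold phi1hat; rw [if_neg (by omega), if_pos (by omega)]
    fin_cases c <;> fin_cases d <;>
      simp [hhatF, Fin.sum_univ_two, p00, p0M, p10, p1M, Complex.conj_ofReal, sqrt2_sq, map_neg]
  · obtain ⟨A, B, hAB, e0n, e0M, e1n, e1M⟩ := entries N M r hNM hM n hn0 hn
    have hω : omegaN N ≠ 0 := Complex.exp_ne_zero _
    set w := omegaN N ^ (n:ℤ) with hwdef
    set w' := omegaN N ^ (-(n:ℤ)) with hw'def
    have hww : w * w' = 1 := by
      rw [hwdef, hw'def, ← zpow_add₀ hω]; simp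
    have hcw : (starRingEnd ℂ) w = w' := by rw [hwdef, conj_omega_zpow, hw'def]
    have hIsq := Complex.I_sq
    have hMn : n + M = M + n := Nat.add_comm n M
    fin_cases c <;> fin_cases d <;>
      simp only [hhatF, Fin.sum_univ_two, Fin.val_zero, Fin.val_one, Nat.zero_mul, Nat.one_mul,
        Nat.add_zero, hMn, e0n, e0M, e1n, e1M] <;>
      norm_num [map_mul, map_neg, Complex.conj_I, Complex.conj_ofReal, hcw, Fin.ext_iff]
    · linear_combination hAB + (B:ℂ)^2*hww - ((A:ℂ)^2 + w*w'*(B:ℂ)^2)*hIsq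
    · linear_combination (-(Complex.I^2)*(A:ℂ)*(B:ℂ))*hww
    · linear_combination (-(Complex.I^2)*(A:ℂ)*(B:ℂ))*hww
    · linear_combination hAB + (A:ℂ)^2*hww - ((B:ℂ)^2 + w*w'*(A:ℂ)^2)*hIsq

/-- The complementary wavelet packets satisfy the same orthonormality
relations as ψ₀, ψ₁: ⟨φ_μ[·−2l], φ_ν[·−2p]⟩ = δ[μ−ν]δ[l−p]; in particular the family of
their two-sample shifts is an orthonormal basis of Π[N] (reconstruction formula). -/
theorem stmt_11 (j r : ℕ) (hj : 3 ≤ j) (hr : 1 ≤ r) (N : ℕ) (hN : N = 2 ^ j) :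
    (∀ μ ν : Fin 2, ∀ l p : ℕ, l < N / 2 → p < N / 2 →
      ip N (fun k => phiW N r μ (k - 2 * (l : ℤ))) (fun k => phiW N r ν (k - 2 * (p : ℤ))) =
        if μ = ν ∧ l = p then 1 else 0) ∧
    (∀ x : ℤ → ℂ, (∀ k : ℤ, x (k + N) = x k) → ∀ k : ℤ,
      x k = ∑ μ : Fin 2, ∑ l ∈ Finset.range (N / 2),
        ip N x (fun t => phiW N r μ (t - 2 * (l : ℤ))) * phiW N r μ (k - 2 * (l : ℤ))) := by
  have hN0 : N ≠ 0 := by subst hN; positivity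
  have h2dvd : 2 ∣ N := by subst hN; exact dvd_pow_self 2 (by omega)
  have hj8 : 8 ≤ N := by
    subst hN
    calc (8:ℕ) = 2^3 := by norm_num
    _ ≤ 2^j := Nat.pow_le_pow_right (by norm_num) hj
  set M := N / 2 with hMdef
  have hNM : N = 2 * M := by omega
  have hM : M ≠ 0 := by omega
  have hNc : (N:ℂ) ≠ 0 := Nat.cast_ne_zero.2 hN0
  have hMc : (M:ℂ) ≠ 0 := Nat.cast_ne_zero.2 hM
  have hNMc : (N:ℂ) = 2 * M := by rw [hNM]; push_cast; ring
  have hNMz : (N:ℤ) = 2 * M := by omega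
  have hif : ∀ (μ : Fin 2) (n : ℕ),
      (if μ.val = 0 then phi0hat N r n else phi1hat N r n) = hhatF N r μ n := fun _ _ => rfl
  constructor
  · -- Part 1: orthonormality
    intro μ ν l p hl hp
    unfold ip phiW
    simp only [hif]
    have e1 : ∀ k : ℕ, ((k:ℤ) - 2*(l:ℤ)) = (k:ℤ) + (-(2*(l:ℤ))) := fun k => by ring
    have e2 : ∀ k : ℕ, ((k:ℤ) - 2*(p:ℤ)) = (k:ℤ) + (-(2*(p:ℤ))) := fun k => by ring
    simp only [e1, e2]
    rw [ip_shift N hN0 (hhatF N r μ) (hhatF N r ν) (-(2*(l:ℤ))) (-(2*(p:ℤ)))]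
    have e3 : ∀ n : ℕ, ((-(2*(l:ℤ))) - (-(2*(p:ℤ)))) * (n:ℤ) = 2 * (n:ℤ) * ((p:ℤ) - l) :=
      fun n => by ring
    simp only [e3]
    rw [show Finset.range N = Finset.range (M + M) from by congr 1; omega,
      Finset.sum_range_add, ← Finset.sum_add_distrib]
    have hrow : ∀ n ∈ Finset.range M,
        omegaN N ^ (2 * (n:ℤ) * ((p:ℤ) - l)) * (hhatF N r μ n * (starRingEnd ℂ) (hhatF N r ν n))
        + omegaN N ^ (2 * ((M + n : ℕ):ℤ) * ((p:ℤ) - l)) *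
            (hhatF N r μ (M + n) * (starRingEnd ℂ) (hhatF N r ν (M + n)))
        = omegaN N ^ (2 * (n:ℤ) * ((p:ℤ) - l)) * (if μ = ν then 2 else 0) := by
      intro n hn
      rw [Finset.mem_range] at hn
      have hω : omegaN N ≠ 0 := Complex.exp_ne_zero _
      have hexp : 2 * ((M + n : ℕ):ℤ) * ((p:ℤ) - l)
          = 2 * (n:ℤ) * ((p:ℤ) - l) + ((p:ℤ) - l) * N := by
        rw [hNMz]; push_cast; ring
      rw [hexp, zpow_add₀ hω, (omega_zpow_one_iff N hN0 (((p:ℤ) - l) * N)).2 ⟨(p:ℤ) - l, by ring⟩, mul_one,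
        ← mul_add, row_lemma N M r hNM hM μ ν n hn]
    rw [Finset.sum_congr rfl hrow, ← Finset.sum_mul, sum_l_omega N M hNM hM ((p:ℤ) - l)]
    have hdvd : ((M:ℤ) ∣ ((p:ℤ) - l)) ↔ p = l := by
      have := dvd_iff_eq M p l hp hl 0
      simpa using this
    by_cases hμν : μ = ν
    · by_cases hlp : l = p
      · rw [if_pos (hdvd.2 hlp.symm), if_pos hμν,
          if_pos (show μ = ν ∧ l = p from ⟨hμν, hlp⟩), hNMc]
        field_simp
      · rw [if_neg (show ¬ (M:ℤ) ∣ ((p:ℤ) - l) from fun hc => hlp (hdvd.1 hc).symm),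
          if_neg (show ¬ (μ = ν ∧ l = p) from fun hc => hlp hc.2)]
        simp
    · rw [if_neg hμν, if_neg (show ¬ (μ = ν ∧ l = p) from fun hc => hμν hc.1)]
      simp
  · -- Part 2: reconstruction
    intro x hx k
    have hper : ∀ (m : ℤ) (a : ℤ), x (a + m * N) = x a := by
      intro m
      induction m using Int.induction_on with
      | zero => intro a; simp
      | succ i ih =>
        intro a
        rw [show a + ((i:ℤ) + 1) * N = (a + (i:ℤ) * N) + N from by ring, hx, ih]
      | pred i ih =>
        intro a
        have h1 := hx (a + (-(i:ℤ) - 1) * N)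
        rw [show a + (-(i:ℤ) - 1) * N + N = a + (-(i:ℤ)) * N from by ring] at h1
        rw [← h1, ih]
    unfold ip
    have hKL : ∀ (μ : Fin 2) (l : ℕ) (a : ℤ), phiW N r μ (a - 2*(l:ℤ))
        = (N:ℂ)⁻¹ * ∑ n ∈ Finset.range N,
            omegaN N ^ ((a - 2*(l:ℤ)) * n) * hhatF N r μ n := fun _ _ _ => rfl
    simp only [hKL]
    have hreorg : ∀ (μ : Fin 2) (l : ℕ),
        (∑ t ∈ Finset.range N, x t * (starRingEnd ℂ)
            ((N:ℂ)⁻¹ * ∑ n ∈ Finset.range N, omegaN N ^ (((t:ℤ) - 2*(l:ℤ)) * n) * hhatF N r μ n)) *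
          ((N:ℂ)⁻¹ * ∑ n ∈ Finset.range N, omegaN N ^ ((k - 2*(l:ℤ)) * n) * hhatF N r μ n)
        = ∑ t ∈ Finset.range N, x t *
            ((starRingEnd ℂ)
              ((N:ℂ)⁻¹ * ∑ n ∈ Finset.range N, omegaN N ^ (((t:ℤ) - 2*(l:ℤ)) * n) * hhatF N r μ n) *
            ((N:ℂ)⁻¹ * ∑ n ∈ Finset.range N, omegaN N ^ ((k - 2*(l:ℤ)) * n) * hhatF N r μ n)) := by
      intro μ l
      rw [Finset.sum_mul]
      exact Finset.sum_congr rfl fun t _ => by ring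
    simp only [hreorg]
    have hswap : ∀ (F : Fin 2 → ℕ → ℕ → ℂ),
        ∑ μ : Fin 2, ∑ l ∈ Finset.range (N/2), ∑ t ∈ Finset.range N, F μ l t
        = ∑ t ∈ Finset.range N, ∑ μ : Fin 2, ∑ l ∈ Finset.range (N/2), F μ l t := by
      intro F
      calc ∑ μ : Fin 2, ∑ l ∈ Finset.range (N/2), ∑ t ∈ Finset.range N, F μ l t
          = ∑ μ : Fin 2, ∑ t ∈ Finset.range N, ∑ l ∈ Finset.range (N/2), F μ l t :=
            Finset.sum_congr rfl fun μ _ => by rw [Finset.sum_comm]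
        _ = ∑ t ∈ Finset.range N, ∑ μ : Fin 2, ∑ l ∈ Finset.range (N/2), F μ l t := by
            rw [Finset.sum_comm]
    rw [hswap]
    have hker : ∀ t : ℕ,
        ∑ μ : Fin 2, ∑ l ∈ Finset.range (N/2),
          x t * ((starRingEnd ℂ)
              ((N:ℂ)⁻¹ * ∑ n ∈ Finset.range N, omegaN N ^ (((t:ℤ) - 2*(l:ℤ)) * n) * hhatF N r μ n) *
            ((N:ℂ)⁻¹ * ∑ n ∈ Finset.range N, omegaN N ^ ((k - 2*(l:ℤ)) * n) * hhatF N r μ n))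
        = x t * ((N:ℂ)⁻¹ * ∑ n ∈ Finset.range N, omegaN N ^ ((k - (t:ℤ)) * n)) := by
      intro t
      simp only [← Finset.mul_sum]
      congr 1
      have hcol : ∀ n < M, ∀ c d : Fin 2,
          (∑ μ : Fin 2, (starRingEnd ℂ) (hhatF N r μ (n + c.val * M)) * hhatF N r μ (n + d.val * M))
            = if c = d then 2 else 0 := fun n hn c d => col_lemma N M r hNM hM n hn c d
      have := kernel N M hNM hM (hhatF N r) hcol (t:ℤ) k
      rw [← hMdef] at *
      exact this
    rw [Finset.sum_congr rfl (fun t _ => hker t)]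
    have hexp : ∀ (t : ℕ) (n : ℕ), (k - (t:ℤ)) * (n:ℤ) = (n:ℤ) * (k - (t:ℤ)) :=
      fun t n => mul_comm _ _
    simp only [hexp]
    have hsum : ∀ t : ℕ, ∑ n ∈ Finset.range N, omegaN N ^ ((n:ℤ) * (k - (t:ℤ)))
        = if (N:ℤ) ∣ (k - (t:ℤ)) then (N:ℂ) else 0 := fun t => sum_omega N hN0 _
    simp only [hsum]
    -- pick the unique t₀
    have hNpos : (0:ℤ) < N := by exact_mod_cast Nat.pos_of_ne_zero hN0
    have hNzne : (N:ℤ) ≠ 0 := by omega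
    set t0 : ℕ := (k % (N:ℤ)).toNat with ht0def
    have hmodnn : 0 ≤ k % (N:ℤ) := Int.emod_nonneg k hNzne
    have hmodlt : k % (N:ℤ) < N := Int.emod_lt_of_pos k hNpos
    have ht0cast : ((t0:ℕ):ℤ) = k % (N:ℤ) := Int.toNat_of_nonneg hmodnn
    have ht0lt : t0 < N := by omega
    have hdvd0 : (N:ℤ) ∣ (k - (t0:ℤ)) := by
      refine ⟨k / (N:ℤ), ?_⟩
      rw [ht0cast]
      have := Int.mul_ediv_add_emod k (N:ℤ)
      omega
    rw [Finset.sum_eq_single_of_mem t0 (Finset.mem_range.2 ht0lt)]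
    · rw [if_pos hdvd0]
      have hval : (N:ℂ)⁻¹ * (N:ℂ) = 1 := inv_mul_cancel₀ hNc
      rw [hval, mul_one]
      obtain ⟨q, hq⟩ := hdvd0
      have hk : k = (t0:ℤ) + q * N := by linarith [hq, mul_comm q (N:ℤ)]
      rw [hk, hper q (t0:ℤ)]
    · intro t ht htne
      rw [Finset.mem_range] at ht
      have : ¬ (N:ℤ) ∣ (k - (t:ℤ)) := by
        intro hc
        have hd : (N:ℤ) ∣ ((t0:ℤ) - (t:ℤ)) := by
          obtain ⟨q1, hq1⟩ := hdvd0
          obtain ⟨q2, hq2⟩ := hc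
          exact ⟨q2 - q1, by linarith [mul_sub (N:ℤ) q2 q1]⟩
        have habs : |((t0:ℤ) - (t:ℤ))| < N := by rw [abs_lt]; omega
        have := Int.eq_zero_of_abs_lt_dvd hd habs
        omega
      rw [if_neg this, mul_zero, mul_zero]
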